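/- On the reference prism, with λ₀ = z and λᵢ for i = 1,2,3 the triangle barycentric coordinates λ₁ = 1−x−y, λ₂ = x, λ₃ = y (viewed as functions on ℝ³), the 3D gradients satisfy ∇λᵢ · ∇λ₀ = 0 for i = 1,2,3, and ∇λ₀ = ∇λ₄ = ∇λ₅ = (0,0,1) where λ₄ = z+1, λ₅ = z−1. Consequently, for distinct i,j,k ∈ {1,2,3}, the functions ψᵢ = (1/2)(pᵢ − λ₀(λᵢ − (1/6)λ₄λ₅)) and ψᵢ₊₃ = (1/2)(pᵢ + λ₀(λᵢ − (1/6)λ₄λ₅)), where pᵢ is the Morley nodal function of Lemma above (regarded as a function of (x,y)), satisfy ψᵢ(V_m) = δ_{i m} and ψᵢ₊₃(V_m) = δ_{i+3, m} for m = 1,…,6. -/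
import Mathlib


noncomputable section

def pdx (f : ℝ → ℝ → ℝ → ℝ) (a b c : ℝ) : ℝ := deriv (fun t => f t b c) a
def pdy (f : ℝ → ℝ → ℝ → ℝ) (a b c : ℝ) : ℝ := deriv (fun t => f a t c) b
def pdz (f : ℝ → ℝ → ℝ → ℝ) (a b c : ℝ) : ℝ := deriv (fun t => f a b t) c

/-- The coordinates `λ₁, λ₂, λ₃, λ₀, λ₄, λ₅` as functions on ℝ³. -/
def lam1 (x y z : ℝ) : ℝ := 1 - x - y
def lam2 (x y z : ℝ) : ℝ := x
def lam3 (x y z : ℝ) : ℝ := y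
def lam0 (x y z : ℝ) : ℝ := z
def lam4 (x y z : ℝ) : ℝ := z + 1
def lam5 (x y z : ℝ) : ℝ := z - 1

/-- The 2D Morley functions `q₁,q₂,q₃`. -/
def qM : Fin 3 → (ℝ → ℝ → ℝ) :=
  ![fun x y => (1-x-y) * ((1-x-y) - 1) / Real.sqrt 2,
    fun x y => x * (x - 1),
    fun x y => y * (y - 1)]

/-- The 2D Morley functions `p₁,p₂,p₃` (with
`∇λ₁ = (−1,−1)`, `∇λ₂ = (1,0)`, `∇λ₃ = (0,1)` in 2D). -/
def pM : Fin 3 → (ℝ → ℝ → ℝ) :=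
  ![fun x y => (1-x-y) + 2 * x * y - (0:ℝ) * (qM 1 x y / 1 + qM 2 x y / 1),
    fun x y => x + 2 * y * (1-x-y)
      - (-1:ℝ) * (qM 2 x y / 1 + qM 0 x y / Real.sqrt 2),
    fun x y => y + 2 * (1-x-y) * x
      - (-1:ℝ) * (qM 0 x y / Real.sqrt 2 + qM 1 x y / 1)]

/-- The `λ` coordinates viewed as a `Fin 3`-indexed family. -/
def lamF : Fin 3 → (ℝ → ℝ → ℝ → ℝ) := ![lam1, lam2, lam3]

/-- The vertex nodal functions
`ψᵢ = (1/2)(pᵢ − λ₀(λᵢ − (1/6)λ₄λ₅))` and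
`ψᵢ₊₃ = (1/2)(pᵢ + λ₀(λᵢ − (1/6)λ₄λ₅))`, `i = 1,2,3`. -/
def Psi : Fin 6 → (ℝ × ℝ × ℝ → ℝ) :=
  ![fun p => (1/2) * (pM 0 p.1 p.2.1 - lam0 p.1 p.2.1 p.2.2 *
      (lam1 p.1 p.2.1 p.2.2 - (1/6) * lam4 p.1 p.2.1 p.2.2 * lam5 p.1 p.2.1 p.2.2)),
    fun p => (1/2) * (pM 1 p.1 p.2.1 - lam0 p.1 p.2.1 p.2.2 *
      (lam2 p.1 p.2.1 p.2.2 - (1/6) * lam4 p.1 p.2.1 p.2.2 * lam5 p.1 p.2.1 p.2.2)),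
    fun p => (1/2) * (pM 2 p.1 p.2.1 - lam0 p.1 p.2.1 p.2.2 *
      (lam3 p.1 p.2.1 p.2.2 - (1/6) * lam4 p.1 p.2.1 p.2.2 * lam5 p.1 p.2.1 p.2.2)),
    fun p => (1/2) * (pM 0 p.1 p.2.1 + lam0 p.1 p.2.1 p.2.2 *
      (lam1 p.1 p.2.1 p.2.2 - (1/6) * lam4 p.1 p.2.1 p.2.2 * lam5 p.1 p.2.1 p.2.2)),
    fun p => (1/2) * (pM 1 p.1 p.2.1 + lam0 p.1 p.2.1 p.2.2 *
      (lam2 p.1 p.2.1 p.2.2 - (1/6) * lam4 p.1 p.2.1 p.2.2 * lam5 p.1 p.2.1 p.2.2)),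
    fun p => (1/2) * (pM 2 p.1 p.2.1 + lam0 p.1 p.2.1 p.2.2 *
      (lam3 p.1 p.2.1 p.2.2 - (1/6) * lam4 p.1 p.2.1 p.2.2 * lam5 p.1 p.2.1 p.2.2))]

/-- The six vertices of the reference prism. -/
def Vtx : Fin 6 → ℝ × ℝ × ℝ :=
  ![(0,0,-1), (1,0,-1), (0,1,-1), (0,0,1), (1,0,1), (0,1,1)]

lemma q0d (x y : ℝ) : qM 0 x y = (1-x-y) * ((1-x-y) - 1) / Real.sqrt 2 := rfl
lemma q1d (x y : ℝ) : qM 1 x y = x * (x - 1) := rfl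
lemma q2d (x y : ℝ) : qM 2 x y = y * (y - 1) := rfl
lemma pv00 : pM 0 0 0 = 1 := by
  show ((1:ℝ)-(0:ℝ)-(0:ℝ)) + 2 * (0:ℝ) * (0:ℝ) - (0:ℝ) * (qM 1 (0:ℝ) (0:ℝ) / 1 + qM 2 (0:ℝ) (0:ℝ) / 1) = 1
  norm_num [q0d, q1d, q2d]
lemma pv01 : pM 0 1 0 = 0 := by
  show ((1:ℝ)-(1:ℝ)-(0:ℝ)) + 2 * (1:ℝ) * (0:ℝ) - (0:ℝ) * (qM 1 (1:ℝ) (0:ℝ) / 1 + qM 2 (1:ℝ) (0:ℝ) / 1) = 0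
  norm_num [q0d, q1d, q2d]
lemma pv02 : pM 0 0 1 = 0 := by
  show ((1:ℝ)-(0:ℝ)-(1:ℝ)) + 2 * (0:ℝ) * (1:ℝ) - (0:ℝ) * (qM 1 (0:ℝ) (1:ℝ) / 1 + qM 2 (0:ℝ) (1:ℝ) / 1) = 0
  norm_num [q0d, q1d, q2d]
lemma pv10 : pM 1 0 0 = 0 := by
  show (0:ℝ) + 2 * (0:ℝ) * (1-(0:ℝ)-(0:ℝ)) - (-1:ℝ) * (qM 2 (0:ℝ) (0:ℝ) / 1 + qM 0 (0:ℝ) (0:ℝ) / Real.sqrt 2) = 0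
  norm_num [q0d, q1d, q2d]
lemma pv11 : pM 1 1 0 = 1 := by
  show (1:ℝ) + 2 * (0:ℝ) * (1-(1:ℝ)-(0:ℝ)) - (-1:ℝ) * (qM 2 (1:ℝ) (0:ℝ) / 1 + qM 0 (1:ℝ) (0:ℝ) / Real.sqrt 2) = 1
  norm_num [q0d, q1d, q2d]
lemma pv12 : pM 1 0 1 = 0 := by
  show (0:ℝ) + 2 * (1:ℝ) * (1-(0:ℝ)-(1:ℝ)) - (-1:ℝ) * (qM 2 (0:ℝ) (1:ℝ) / 1 + qM 0 (0:ℝ) (1:ℝ) / Real.sqrt 2) = 0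
  norm_num [q0d, q1d, q2d]
lemma pv20 : pM 2 0 0 = 0 := by
  show (0:ℝ) + 2 * (1-(0:ℝ)-(0:ℝ)) * (0:ℝ) - (-1:ℝ) * (qM 0 (0:ℝ) (0:ℝ) / Real.sqrt 2 + qM 1 (0:ℝ) (0:ℝ) / 1) = 0
  norm_num [q0d, q1d, q2d]
lemma pv21 : pM 2 1 0 = 0 := by
  show (0:ℝ) + 2 * (1-(1:ℝ)-(0:ℝ)) * (1:ℝ) - (-1:ℝ) * (qM 0 (1:ℝ) (0:ℝ) / Real.sqrt 2 + qM 1 (1:ℝ) (0:ℝ) / 1) = 0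
  norm_num [q0d, q1d, q2d]
lemma pv22 : pM 2 0 1 = 1 := by
  show (1:ℝ) + 2 * (1-(0:ℝ)-(1:ℝ)) * (0:ℝ) - (-1:ℝ) * (qM 0 (0:ℝ) (1:ℝ) / Real.sqrt 2 + qM 1 (0:ℝ) (1:ℝ) / 1) = 1
  norm_num [q0d, q1d, q2d]

/-- Gradient orthogonality relations `∇λᵢ · ∇λ₀ = 0`,
`∇λ₀ = ∇λ₄ = ∇λ₅ = (0,0,1)`, and the vertex nodal property
`ψᵢ(V_m) = δ_{i m}`. -/
theorem gradient_orthogonality_and_vertex_basis :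
    (∀ (i : Fin 3) (a b c : ℝ),
      pdx (lamF i) a b c * pdx lam0 a b c + pdy (lamF i) a b c * pdy lam0 a b c
        + pdz (lamF i) a b c * pdz lam0 a b c = 0) ∧
    (∀ a b c : ℝ,
      (pdx lam0 a b c, pdy lam0 a b c, pdz lam0 a b c) = ((0:ℝ), (0:ℝ), (1:ℝ)) ∧
      (pdx lam4 a b c, pdy lam4 a b c, pdz lam4 a b c) = ((0:ℝ), (0:ℝ), (1:ℝ)) ∧
      (pdx lam5 a b c, pdy lam5 a b c, pdz lam5 a b c) = ((0:ℝ), (0:ℝ), (1:ℝ))) ∧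
    (∀ i m : Fin 6, Psi i (Vtx m) = if i = m then 1 else 0) := by
  refine ⟨?_, ?_, ?_⟩
  · intro i a b c
    fin_cases i <;>
      simp only [lamF, Matrix.cons_val_zero, Matrix.cons_val_one, Matrix.head_cons,
        Matrix.cons_val_two, Matrix.tail_cons] <;>
      simp [pdx, pdy, pdz, lam0, lam1, lam2, lam3]
  · intro a b c
    refine ⟨?_, ?_, ?_⟩ <;>
      simp [pdx, pdy, pdz, lam0, lam4, lam5]
  · intro i m
    fin_cases i <;> fin_cases m
    · have h : ((1:ℝ)/2) * (pM 0 0 0 - lam0 0 0 (-1) * (lam1 0 0 (-1) - (1/6) * lam4 0 0 (-1) * lam5 0 0 (-1))) = (1:ℝ) := by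
        norm_num [lam0, lam1, lam2, lam3, lam4, lam5, pv00]
      exact h.trans (by norm_num [Fin.ext_iff])
    · have h : ((1:ℝ)/2) * (pM 0 1 0 - lam0 1 0 (-1) * (lam1 1 0 (-1) - (1/6) * lam4 1 0 (-1) * lam5 1 0 (-1))) = (0:ℝ) := by
        norm_num [lam0, lam1, lam2, lam3, lam4, lam5, pv01]
      exact h.trans (by norm_num [Fin.ext_iff])
    · have h : ((1:ℝ)/2) * (pM 0 0 1 - lam0 0 1 (-1) * (lam1 0 1 (-1) - (1/6) * lam4 0 1 (-1) * lam5 0 1 (-1))) = (0:ℝ) := by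
        norm_num [lam0, lam1, lam2, lam3, lam4, lam5, pv02]
      exact h.trans (by norm_num [Fin.ext_iff])
    · have h : ((1:ℝ)/2) * (pM 0 0 0 - lam0 0 0 (1) * (lam1 0 0 (1) - (1/6) * lam4 0 0 (1) * lam5 0 0 (1))) = (0:ℝ) := by
        norm_num [lam0, lam1, lam2, lam3, lam4, lam5, pv00]
      exact h.trans (by norm_num [Fin.ext_iff])
    · have h : ((1:ℝ)/2) * (pM 0 1 0 - lam0 1 0 (1) * (lam1 1 0 (1) - (1/6) * lam4 1 0 (1) * lam5 1 0 (1))) = (0:ℝ) := by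
        norm_num [lam0, lam1, lam2, lam3, lam4, lam5, pv01]
      exact h.trans (by norm_num [Fin.ext_iff])
    · have h : ((1:ℝ)/2) * (pM 0 0 1 - lam0 0 1 (1) * (lam1 0 1 (1) - (1/6) * lam4 0 1 (1) * lam5 0 1 (1))) = (0:ℝ) := by
        norm_num [lam0, lam1, lam2, lam3, lam4, lam5, pv02]
      exact h.trans (by norm_num [Fin.ext_iff])
    · have h : ((1:ℝ)/2) * (pM 1 0 0 - lam0 0 0 (-1) * (lam2 0 0 (-1) - (1/6) * lam4 0 0 (-1) * lam5 0 0 (-1))) = (0:ℝ) := by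
        norm_num [lam0, lam1, lam2, lam3, lam4, lam5, pv10]
      exact h.trans (by norm_num [Fin.ext_iff])
    · have h : ((1:ℝ)/2) * (pM 1 1 0 - lam0 1 0 (-1) * (lam2 1 0 (-1) - (1/6) * lam4 1 0 (-1) * lam5 1 0 (-1))) = (1:ℝ) := by
        norm_num [lam0, lam1, lam2, lam3, lam4, lam5, pv11]
      exact h.trans (by norm_num [Fin.ext_iff])
    · have h : ((1:ℝ)/2) * (pM 1 0 1 - lam0 0 1 (-1) * (lam2 0 1 (-1) - (1/6) * lam4 0 1 (-1) * lam5 0 1 (-1))) = (0:ℝ) := by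
        norm_num [lam0, lam1, lam2, lam3, lam4, lam5, pv12]
      exact h.trans (by norm_num [Fin.ext_iff])
    · have h : ((1:ℝ)/2) * (pM 1 0 0 - lam0 0 0 (1) * (lam2 0 0 (1) - (1/6) * lam4 0 0 (1) * lam5 0 0 (1))) = (0:ℝ) := by
        norm_num [lam0, lam1, lam2, lam3, lam4, lam5, pv10]
      exact h.trans (by norm_num [Fin.ext_iff])
    · have h : ((1:ℝ)/2) * (pM 1 1 0 - lam0 1 0 (1) * (lam2 1 0 (1) - (1/6) * lam4 1 0 (1) * lam5 1 0 (1))) = (0:ℝ) := by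
        norm_num [lam0, lam1, lam2, lam3, lam4, lam5, pv11]
      exact h.trans (by norm_num [Fin.ext_iff])
    · have h : ((1:ℝ)/2) * (pM 1 0 1 - lam0 0 1 (1) * (lam2 0 1 (1) - (1/6) * lam4 0 1 (1) * lam5 0 1 (1))) = (0:ℝ) := by
        norm_num [lam0, lam1, lam2, lam3, lam4, lam5, pv12]
      exact h.trans (by norm_num [Fin.ext_iff])
    · have h : ((1:ℝ)/2) * (pM 2 0 0 - lam0 0 0 (-1) * (lam3 0 0 (-1) - (1/6) * lam4 0 0 (-1) * lam5 0 0 (-1))) = (0:ℝ) := by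
        norm_num [lam0, lam1, lam2, lam3, lam4, lam5, pv20]
      exact h.trans (by norm_num [Fin.ext_iff])
    · have h : ((1:ℝ)/2) * (pM 2 1 0 - lam0 1 0 (-1) * (lam3 1 0 (-1) - (1/6) * lam4 1 0 (-1) * lam5 1 0 (-1))) = (0:ℝ) := by
        norm_num [lam0, lam1, lam2, lam3, lam4, lam5, pv21]
      exact h.trans (by norm_num [Fin.ext_iff])
    · have h : ((1:ℝ)/2) * (pM 2 0 1 - lam0 0 1 (-1) * (lam3 0 1 (-1) - (1/6) * lam4 0 1 (-1) * lam5 0 1 (-1))) = (1:ℝ) := by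
        norm_num [lam0, lam1, lam2, lam3, lam4, lam5, pv22]
      exact h.trans (by norm_num [Fin.ext_iff])
    · have h : ((1:ℝ)/2) * (pM 2 0 0 - lam0 0 0 (1) * (lam3 0 0 (1) - (1/6) * lam4 0 0 (1) * lam5 0 0 (1))) = (0:ℝ) := by
        norm_num [lam0, lam1, lam2, lam3, lam4, lam5, pv20]
      exact h.trans (by norm_num [Fin.ext_iff])
    · have h : ((1:ℝ)/2) * (pM 2 1 0 - lam0 1 0 (1) * (lam3 1 0 (1) - (1/6) * lam4 1 0 (1) * lam5 1 0 (1))) = (0:ℝ) := by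
        norm_num [lam0, lam1, lam2, lam3, lam4, lam5, pv21]
      exact h.trans (by norm_num [Fin.ext_iff])
    · have h : ((1:ℝ)/2) * (pM 2 0 1 - lam0 0 1 (1) * (lam3 0 1 (1) - (1/6) * lam4 0 1 (1) * lam5 0 1 (1))) = (0:ℝ) := by
        norm_num [lam0, lam1, lam2, lam3, lam4, lam5, pv22]
      exact h.trans (by norm_num [Fin.ext_iff])
    · have h : ((1:ℝ)/2) * (pM 0 0 0 + lam0 0 0 (-1) * (lam1 0 0 (-1) - (1/6) * lam4 0 0 (-1) * lam5 0 0 (-1))) = (0:ℝ) := by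
        norm_num [lam0, lam1, lam2, lam3, lam4, lam5, pv00]
      exact h.trans (by norm_num [Fin.ext_iff])
    · have h : ((1:ℝ)/2) * (pM 0 1 0 + lam0 1 0 (-1) * (lam1 1 0 (-1) - (1/6) * lam4 1 0 (-1) * lam5 1 0 (-1))) = (0:ℝ) := by
        norm_num [lam0, lam1, lam2, lam3, lam4, lam5, pv01]
      exact h.trans (by norm_num [Fin.ext_iff])
    · have h : ((1:ℝ)/2) * (pM 0 0 1 + lam0 0 1 (-1) * (lam1 0 1 (-1) - (1/6) * lam4 0 1 (-1) * lam5 0 1 (-1))) = (0:ℝ) := by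
        norm_num [lam0, lam1, lam2, lam3, lam4, lam5, pv02]
      exact h.trans (by norm_num [Fin.ext_iff])
    · have h : ((1:ℝ)/2) * (pM 0 0 0 + lam0 0 0 (1) * (lam1 0 0 (1) - (1/6) * lam4 0 0 (1) * lam5 0 0 (1))) = (1:ℝ) := by
        norm_num [lam0, lam1, lam2, lam3, lam4, lam5, pv00]
      exact h.trans (by norm_num [Fin.ext_iff])
    · have h : ((1:ℝ)/2) * (pM 0 1 0 + lam0 1 0 (1) * (lam1 1 0 (1) - (1/6) * lam4 1 0 (1) * lam5 1 0 (1))) = (0:ℝ) := by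
        norm_num [lam0, lam1, lam2, lam3, lam4, lam5, pv01]
      exact h.trans (by norm_num [Fin.ext_iff])
    · have h : ((1:ℝ)/2) * (pM 0 0 1 + lam0 0 1 (1) * (lam1 0 1 (1) - (1/6) * lam4 0 1 (1) * lam5 0 1 (1))) = (0:ℝ) := by
        norm_num [lam0, lam1, lam2, lam3, lam4, lam5, pv02]
      exact h.trans (by norm_num [Fin.ext_iff])
    · have h : ((1:ℝ)/2) * (pM 1 0 0 + lam0 0 0 (-1) * (lam2 0 0 (-1) - (1/6) * lam4 0 0 (-1) * lam5 0 0 (-1))) = (0:ℝ) := by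
        norm_num [lam0, lam1, lam2, lam3, lam4, lam5, pv10]
      exact h.trans (by norm_num [Fin.ext_iff])
    · have h : ((1:ℝ)/2) * (pM 1 1 0 + lam0 1 0 (-1) * (lam2 1 0 (-1) - (1/6) * lam4 1 0 (-1) * lam5 1 0 (-1))) = (0:ℝ) := by
        norm_num [lam0, lam1, lam2, lam3, lam4, lam5, pv11]
      exact h.trans (by norm_num [Fin.ext_iff])
    · have h : ((1:ℝ)/2) * (pM 1 0 1 + lam0 0 1 (-1) * (lam2 0 1 (-1) - (1/6) * lam4 0 1 (-1) * lam5 0 1 (-1))) = (0:ℝ) := by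
        norm_num [lam0, lam1, lam2, lam3, lam4, lam5, pv12]
      exact h.trans (by norm_num [Fin.ext_iff])
    · have h : ((1:ℝ)/2) * (pM 1 0 0 + lam0 0 0 (1) * (lam2 0 0 (1) - (1/6) * lam4 0 0 (1) * lam5 0 0 (1))) = (0:ℝ) := by
        norm_num [lam0, lam1, lam2, lam3, lam4, lam5, pv10]
      exact h.trans (by norm_num [Fin.ext_iff])
    · have h : ((1:ℝ)/2) * (pM 1 1 0 + lam0 1 0 (1) * (lam2 1 0 (1) - (1/6) * lam4 1 0 (1) * lam5 1 0 (1))) = (1:ℝ) := by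
        norm_num [lam0, lam1, lam2, lam3, lam4, lam5, pv11]
      exact h.trans (by norm_num [Fin.ext_iff])
    · have h : ((1:ℝ)/2) * (pM 1 0 1 + lam0 0 1 (1) * (lam2 0 1 (1) - (1/6) * lam4 0 1 (1) * lam5 0 1 (1))) = (0:ℝ) := by
        norm_num [lam0, lam1, lam2, lam3, lam4, lam5, pv12]
      exact h.trans (by norm_num [Fin.ext_iff])
    · have h : ((1:ℝ)/2) * (pM 2 0 0 + lam0 0 0 (-1) * (lam3 0 0 (-1) - (1/6) * lam4 0 0 (-1) * lam5 0 0 (-1))) = (0:ℝ) := by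
        norm_num [lam0, lam1, lam2, lam3, lam4, lam5, pv20]
      exact h.trans (by norm_num [Fin.ext_iff])
    · have h : ((1:ℝ)/2) * (pM 2 1 0 + lam0 1 0 (-1) * (lam3 1 0 (-1) - (1/6) * lam4 1 0 (-1) * lam5 1 0 (-1))) = (0:ℝ) := by
        norm_num [lam0, lam1, lam2, lam3, lam4, lam5, pv21]
      exact h.trans (by norm_num [Fin.ext_iff])
    · have h : ((1:ℝ)/2) * (pM 2 0 1 + lam0 0 1 (-1) * (lam3 0 1 (-1) - (1/6) * lam4 0 1 (-1) * lam5 0 1 (-1))) = (0:ℝ) := by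
        norm_num [lam0, lam1, lam2, lam3, lam4, lam5, pv22]
      exact h.trans (by norm_num [Fin.ext_iff])
    · have h : ((1:ℝ)/2) * (pM 2 0 0 + lam0 0 0 (1) * (lam3 0 0 (1) - (1/6) * lam4 0 0 (1) * lam5 0 0 (1))) = (0:ℝ) := by
        norm_num [lam0, lam1, lam2, lam3, lam4, lam5, pv20]
      exact h.trans (by norm_num [Fin.ext_iff])
    · have h : ((1:ℝ)/2) * (pM 2 1 0 + lam0 1 0 (1) * (lam3 1 0 (1) - (1/6) * lam4 1 0 (1) * lam5 1 0 (1))) = (0:ℝ) := by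
        norm_num [lam0, lam1, lam2, lam3, lam4, lam5, pv21]
      exact h.trans (by norm_num [Fin.ext_iff])
    · have h : ((1:ℝ)/2) * (pM 2 0 1 + lam0 0 1 (1) * (lam3 0 1 (1) - (1/6) * lam4 0 1 (1) * lam5 0 1 (1))) = (1:ℝ) := by
        norm_num [lam0, lam1, lam2, lam3, lam4, lam5, pv22]
      exact h.trans (by norm_num [Fin.ext_iff])
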